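/- arXiv:2603.16999 — 2 statements merged into one kernel-verified Lean document; each statement's English description precedes it below -/
import Mathlib

section
/- Let (H_i, ι) over directed poset I and (K_j, κ) over directed poset J be inductive systems of Hilbert spaces with isometric connecting maps, and let H^ind, K^ind, (H⊗K)^ind denote the Hilbert-space completions of the respective inductive limits (the third over the product poset I × J with connecting maps ι ⊗ κ). Then there is a unitary isomorphism (H⊗K)^ind ≅ H^ind ⊗ K^ind determined on classes of decomposable tensors by [x_i ⊗ y_j, (i,j)] ↦ [x_i, i] ⊗ [y_j, j]. -/
/-- Let `(H_i, f)` and `(K_j, g)` be inductive systems of Hilbert spaces with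
isometric connecting maps over directed posets `I`, `J`.  Let `E` (resp. `F`) be the Hilbert
space completion of the inductive limit of `(H_i)` (resp. `(K_j)`), presented by compatible
maps `jH i : H i → E` (resp. `jK j : K j → F`) with the induced inner products and dense joint
range; let `G` be the completion of the inductive limit of the product system over `I × J`
formed by the Hilbert tensor products `H i ⊗ K j`, presented on decomposable tensors by the
bilinear maps `jHK i j : H i → K j → G`; and let `W` together with the bilinear map
`m : E → F → W` be the Hilbert tensor product `E ⊗ F` (inner products of decomposables
multiply, decomposables span a dense subspace).  Then there is a unitary isomorphism
`(H ⊗ K)^ind ≅ H^ind ⊗ K^ind`, i.e. `G ≅ W`, determined on classes of decomposable tensors by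
`[x_i ⊗ y_j, (i,j)] ↦ [x_i, i] ⊗ [y_j, j]`. -/
theorem stmt15 {I J : Type*}
    [PartialOrder I] [IsDirected I (· ≤ ·)] [Nonempty I]
    [PartialOrder J] [IsDirected J (· ≤ ·)] [Nonempty J]
    (H : I → Type*) [∀ i, NormedAddCommGroup (H i)] [∀ i, InnerProductSpace ℂ (H i)]
    (K : J → Type*) [∀ j, NormedAddCommGroup (K j)] [∀ j, InnerProductSpace ℂ (K j)]
    (f : ∀ i i', i ≤ i' → (H i →ₗ[ℂ] H i'))
    (g : ∀ j j', j ≤ j' → (K j →ₗ[ℂ] K j'))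
    (hfiso : ∀ i i' (h : i ≤ i') (x y : H i),
      (inner ℂ (f i i' h x) (f i i' h y) : ℂ) = inner ℂ x y)
    (hgiso : ∀ j j' (h : j ≤ j') (x y : K j),
      (inner ℂ (g j j' h x) (g j j' h y) : ℂ) = inner ℂ x y)
    -- `E`: the completion `H^ind` of the inductive limit of `(H_i, f)`
    {E : Type*} [NormedAddCommGroup E] [InnerProductSpace ℂ E] [CompleteSpace E]
    (jH : ∀ i, H i →ₗ[ℂ] E)
    (hjHcomp : ∀ i i' (h : i ≤ i') (x : H i), jH i' (f i i' h x) = jH i x)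
    (hjHinner : ∀ i i' (x : H i) (y : H i') (k : I) (h1 : i ≤ k) (h2 : i' ≤ k),
      (inner ℂ (jH i x) (jH i' y) : ℂ) = inner ℂ (f i k h1 x) (f i' k h2 y))
    (hjHdense : Dense (↑(⨆ i, LinearMap.range (jH i)) : Set E))
    -- `F`: the completion `K^ind` of the inductive limit of `(K_j, g)`
    {F : Type*} [NormedAddCommGroup F] [InnerProductSpace ℂ F] [CompleteSpace F]
    (jK : ∀ j, K j →ₗ[ℂ] F)
    (hjKcomp : ∀ j j' (h : j ≤ j') (y : K j), jK j' (g j j' h y) = jK j y)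
    (hjKinner : ∀ j j' (x : K j) (y : K j') (l : J) (h1 : j ≤ l) (h2 : j' ≤ l),
      (inner ℂ (jK j x) (jK j' y) : ℂ) = inner ℂ (g j l h1 x) (g j' l h2 y))
    (hjKdense : Dense (↑(⨆ j, LinearMap.range (jK j)) : Set F))
    -- `G`: the completion `(H ⊗ K)^ind` of the inductive limit of the tensor-product system
    {G : Type*} [NormedAddCommGroup G] [InnerProductSpace ℂ G] [CompleteSpace G]
    (jHK : ∀ i j, H i →ₗ[ℂ] K j →ₗ[ℂ] G)
    (hjHKcomp : ∀ i i' j j' (hi : i ≤ i') (hj : j ≤ j') (x : H i) (y : K j),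
      jHK i' j' (f i i' hi x) (g j j' hj y) = jHK i j x y)
    (hjHKinner : ∀ i i' j j' (x : H i) (x' : H i') (y : K j) (y' : K j')
        (k : I) (h1 : i ≤ k) (h2 : i' ≤ k) (l : J) (h3 : j ≤ l) (h4 : j' ≤ l),
      (inner ℂ (jHK i j x y) (jHK i' j' x' y') : ℂ)
        = inner ℂ (f i k h1 x) (f i' k h2 x') * inner ℂ (g j l h3 y) (g j' l h4 y'))
    (hjHKdense :
      Dense (↑(Submodule.span ℂ {w : G | ∃ (i : I) (j : J) (x : H i) (y : K j),
        w = jHK i j x y}) : Set G))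
    -- `W`: the Hilbert tensor product `H^ind ⊗ K^ind = E ⊗ F`
    {W : Type*} [NormedAddCommGroup W] [InnerProductSpace ℂ W] [CompleteSpace W]
    (m : E →ₗ[ℂ] F →ₗ[ℂ] W)
    (hm : ∀ (a a' : E) (b b' : F),
      (inner ℂ (m a b) (m a' b') : ℂ) = inner ℂ a a' * inner ℂ b b')
    (hmdense : Dense (↑(Submodule.span ℂ {w : W | ∃ (a : E) (b : F), w = m a b}) : Set W)) :
    ∃ U : G ≃ₗᵢ[ℂ] W, ∀ (i : I) (j : J) (x : H i) (y : K j),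
      U (jHK i j x y) = m (jH i x) (jK j y) := by
  classical
  -- the index type of all decomposable generators
  let σ : Type _ := Σ ij : I × J, H ij.1 × K ij.2
  let d : σ → G := fun a => jHK a.1.1 a.1.2 a.2.1 a.2.2
  let e : σ → W := fun a => m (jH a.1.1 a.2.1) (jK a.1.2 a.2.2)
  let p : (σ →₀ ℂ) →ₗ[ℂ] G := Finsupp.linearCombination ℂ d
  let q : (σ →₀ ℂ) →ₗ[ℂ] W := Finsupp.linearCombination ℂ e
  -- inner products of generators agree
  have gen : ∀ a b : σ, (inner ℂ (d a) (d b) : ℂ) = inner ℂ (e a) (e b) := by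
    rintro ⟨⟨i, j⟩, x, y⟩ ⟨⟨i', j'⟩, x', y'⟩
    obtain ⟨k, h1, h2⟩ := directed_of (· ≤ ·) i i'
    obtain ⟨l, h3, h4⟩ := directed_of (· ≤ ·) j j'
    show (inner ℂ (jHK i j x y) (jHK i' j' x' y') : ℂ)
        = inner ℂ (m (jH i x) (jK j y)) (m (jH i' x') (jK j' y'))
    rw [hjHKinner i i' j j' x x' y y' k h1 h2 l h3 h4, hm,
      hjHinner i i' x x' k h1 h2, hjKinner j j' y y' l h3 h4]
  have key1 : ∀ (a : σ) (w : σ →₀ ℂ), (inner ℂ (d a) (p w) : ℂ) = inner ℂ (e a) (q w) := by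
    intro a w
    induction w using Finsupp.induction_linear with
    | zero => simp
    | add u v hu hv => simp only [map_add, inner_add_right, hu, hv]
    | single b c =>
        simp only [p, q, Finsupp.linearCombination_single, inner_smul_right, gen a b]
  have key : ∀ v w : σ →₀ ℂ, (inner ℂ (p v) (p w) : ℂ) = inner ℂ (q v) (q w) := by
    intro v w
    induction v using Finsupp.induction_linear with
    | zero => simp
    | add u v hu hv => simp only [map_add, inner_add_left, hu, hv]
    | single b c =>
        simp only [p, q, Finsupp.linearCombination_single, inner_smul_left, key1 b w]
  have hnorm : ∀ v : σ →₀ ℂ, ‖q v‖ = ‖p v‖ := by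
    intro v
    have h2 : ‖q v‖ ^ 2 = ‖p v‖ ^ 2 := by
      rw [← @inner_self_eq_norm_sq ℂ, ← @inner_self_eq_norm_sq ℂ, key v v]
    calc ‖q v‖ = √(‖q v‖ ^ 2) := (Real.sqrt_sq (norm_nonneg _)).symm
      _ = √(‖p v‖ ^ 2) := by rw [h2]
      _ = ‖p v‖ := Real.sqrt_sq (norm_nonneg _)
  have hker : LinearMap.ker p ≤ LinearMap.ker q := by
    intro v hv
    simp only [LinearMap.mem_ker] at hv ⊢
    rw [← norm_eq_zero, hnorm v, hv, norm_zero]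
  -- the dense subspace of `G` spanned by decomposables, as the range of `p`
  set S : Submodule ℂ G := LinearMap.range p with hS
  have hSspan : S = Submodule.span ℂ {w : G | ∃ (i : I) (j : J) (x : H i) (y : K j),
      w = jHK i j x y} := by
    rw [hS, Finsupp.range_linearCombination]
    congr 1
    ext w
    constructor
    · rintro ⟨⟨⟨i, j⟩, x, y⟩, rfl⟩; exact ⟨i, j, x, y, rfl⟩
    · rintro ⟨i, j, x, y, rfl⟩; exact ⟨⟨(i, j), x, y⟩, rfl⟩
  have hSdense : Dense (S : Set G) := by rw [hSspan]; exact hjHKdense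
  -- the map on the dense subspace
  let T : S →ₗ[ℂ] W :=
    (Submodule.liftQ (LinearMap.ker p) q hker) ∘ₗ
      (LinearMap.quotKerEquivRange p).symm.toLinearMap
  have hT : ∀ (v : σ →₀ ℂ) (hv : p v ∈ S), T ⟨p v, hv⟩ = q v := by
    intro v hv
    show (Submodule.liftQ (LinearMap.ker p) q hker)
        ((LinearMap.quotKerEquivRange p).symm ⟨p v, hv⟩) = q v
    rw [LinearMap.quotKerEquivRange_symm_apply_image]
    exact Submodule.liftQ_apply _ q v
  have hTnorm : ∀ s : S, ‖T s‖ = ‖s‖ := by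
    rintro ⟨s, hs⟩
    obtain ⟨v, rfl⟩ := hs
    rw [hT v ⟨v, rfl⟩, hnorm]
    rfl
  let TI : S →ₗᵢ[ℂ] W := ⟨T, hTnorm⟩
  let Φ : G →L[ℂ] W :=
    ContinuousLinearMap.extend TI.toContinuousLinearMap (Submodule.subtypeL S)
  have hΦe : ∀ s : S, Φ s = T s := fun s => ContinuousLinearMap.extend_eq (f := TI.toContinuousLinearMap) (e := Submodule.subtypeL S)
    (h_dense := hSdense.denseRange_val) (h_e := isUniformEmbedding_subtype_val.isUniformInducing) (x := s)
  have hΦnorm : ∀ x : G, ‖Φ x‖ = ‖x‖ := by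
    have hclosed : IsClosed {x : G | ‖Φ x‖ = ‖x‖} :=
      isClosed_eq Φ.continuous.norm continuous_norm
    have hsub : (S : Set G) ⊆ {x : G | ‖Φ x‖ = ‖x‖} := by
      intro s hs
      show ‖Φ s‖ = ‖s‖
      rw [show Φ s = T ⟨s, hs⟩ from hΦe ⟨s, hs⟩, hTnorm ⟨s, hs⟩]
      rfl
    intro x
    exact (hclosed.closure_subset_iff.mpr hsub) (hSdense x)
  let ΦI : G →ₗᵢ[ℂ] W := ⟨Φ.toLinearMap, hΦnorm⟩
  have hΦq : ∀ v : σ →₀ ℂ, ΦI (p v) = q v := by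
    intro v
    show Φ (p v) = q v
    rw [show Φ (p v) = T ⟨p v, ⟨v, rfl⟩⟩ from hΦe ⟨p v, ⟨v, rfl⟩⟩]
    exact hT v _
  -- `m` is a bounded bilinear map
  have hmbound : ∀ (a : E) (b : F), ‖m a b‖ ≤ 1 * ‖a‖ * ‖b‖ := by
    intro a b
    have h2 : ‖m a b‖ ^ 2 = (‖a‖ * ‖b‖) ^ 2 := by
      rw [← @inner_self_eq_norm_sq ℂ, hm a a b b, inner_self_eq_norm_sq_to_K,
        inner_self_eq_norm_sq_to_K]
      simp [← Complex.ofReal_pow]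
      ring
    have : ‖m a b‖ = ‖a‖ * ‖b‖ := by
      calc ‖m a b‖ = √(‖m a b‖ ^ 2) := (Real.sqrt_sq (norm_nonneg _)).symm
        _ = √((‖a‖ * ‖b‖) ^ 2) := by rw [h2]
        _ = ‖a‖ * ‖b‖ := Real.sqrt_sq (by positivity)
    rw [this, one_mul]
  let mC : E →L[ℂ] F →L[ℂ] W := LinearMap.mkContinuous₂ m 1 hmbound
  have hmcont : Continuous (fun pr : E × F => m pr.1 pr.2) := mC.continuous₂
  -- all decomposables `m a b` lie in the closure of the span of the `e`-generators
  set Dq : Set W := Set.range e with hDq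
  have step1 : ∀ (i : I) (x : H i), ∀ b ∈ (⨆ j, LinearMap.range (jK j)),
      m (jH i x) b ∈ Submodule.span ℂ Dq := by
    intro i x b hb
    refine Submodule.iSup_induction (motive := fun b => m (jH i x) b ∈ Submodule.span ℂ Dq)
      _ hb (fun j b hbj => ?_) (by simp) (fun u v hu hv => by simp only [map_add]; exact add_mem hu hv)
    obtain ⟨y, rfl⟩ := hbj
    exact Submodule.subset_span ⟨⟨(i, j), x, y⟩, rfl⟩
  have step2 : ∀ a ∈ (⨆ i, LinearMap.range (jH i)), ∀ b ∈ (⨆ j, LinearMap.range (jK j)),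
      m a b ∈ Submodule.span ℂ Dq := by
    intro a ha
    refine Submodule.iSup_induction
      (motive := fun a => ∀ b ∈ (⨆ j, LinearMap.range (jK j)), m a b ∈ Submodule.span ℂ Dq)
      _ ha (fun i a hai => ?_) (by simp) ?_
    · obtain ⟨x, rfl⟩ := hai
      exact step1 i x
    · intro u v hu hv b hb
      simp only [map_add, LinearMap.add_apply]
      exact add_mem (hu b hb) (hv b hb)
  have hmab : ∀ (a : E) (b : F), m a b ∈ closure (Submodule.span ℂ Dq : Set W) := by
    intro a b
    have hmem : (a, b) ∈ closure ((↑(⨆ i, LinearMap.range (jH i)) : Set E) ×ˢ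
        (↑(⨆ j, LinearMap.range (jK j)) : Set F)) := by
      rw [closure_prod_eq]
      exact ⟨hjHdense a, hjKdense b⟩
    exact map_mem_closure (f := fun pr : E × F => m pr.1 pr.2) hmcont hmem
      (fun pr hpr => step2 pr.1 hpr.1 pr.2 hpr.2)
  -- surjectivity of `ΦI`
  have hclosedR : IsClosed (Set.range ΦI) := ΦI.isometry.isClosedEmbedding.isClosed_range
  have hsurj : Function.Surjective ΦI := by
    have hspanDq : (Submodule.span ℂ Dq : Set W) ⊆ Set.range ΦI := by
      intro w hw
      have hq : Submodule.span ℂ Dq = LinearMap.range q :=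
        (Finsupp.range_linearCombination ℂ (v := e)).symm
      rw [hq] at hw
      obtain ⟨v, rfl⟩ := hw
      exact ⟨p v, hΦq v⟩
    have hclDq : closure (Submodule.span ℂ Dq : Set W) ⊆ Set.range ΦI :=
      hclosedR.closure_subset_iff.mpr hspanDq
    have hgen : {w : W | ∃ (a : E) (b : F), w = m a b} ⊆ Set.range ΦI := by
      rintro w ⟨a, b, rfl⟩
      exact hclDq (hmab a b)
    have hspan : (Submodule.span ℂ {w : W | ∃ (a : E) (b : F), w = m a b} : Set W)
        ⊆ Set.range ΦI := by
      have : Set.range ΦI = (LinearMap.range ΦI.toLinearMap : Set W) := rfl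
      rw [this]
      exact Submodule.span_le.mpr (by rw [← this]; exact hgen)
    intro w
    have : w ∈ closure (Submodule.span ℂ {w : W | ∃ (a : E) (b : F), w = m a b} : Set W) :=
      hmdense w
    exact hclosedR.closure_subset_iff.mpr hspan this
  refine ⟨LinearIsometryEquiv.ofSurjective ΦI hsurj, ?_⟩
  intro i j x y
  rw [LinearIsometryEquiv.coe_ofSurjective]
  have h1 : jHK i j x y = p (Finsupp.single ⟨(i, j), (x, y)⟩ 1) := by
    simp [p, d, Finsupp.linearCombination_single]
  have h2 : q (Finsupp.single (⟨(i, j), (x, y)⟩ : σ) 1) = m (jH i x) (jK j y) := by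
    simp [q, e, Finsupp.linearCombination_single]
  rw [h1, hΦq, h2]
end

section
/- Let D₁, D₂ be complex inner product spaces with anti-linear maps P₁ : D₁ → D₁′ and P₂ : D₂ → D₂′ satisfying reality and positive semidefiniteness as sesquilinear forms. Define P : D₁ ⊗ D₂ → (D₁ ⊗ D₂)′ on decomposable tensors by P(φ₁⊗φ₂)[ψ₁⊗ψ₂] = P₁(φ₁)[ψ₁] · P₂(φ₂)[ψ₂] and extend (anti-)linearly. Then ker P = ker P₁ ⊗ D₂ + D₁ ⊗ ker P₂, and there is an isometric isomorphism between the inner-product quotient (D₁⊗D₂)/ker P (with form induced by P) and the tensor product (D₁/ker P₁) ⊗ (D₂/ker P₂) (with the product of the induced forms), given on classes of decomposable tensors by [ψ₁⊗ψ₂] ↦ [ψ₁]⊗[ψ₂]. -/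
open scoped TensorProduct
open ComplexOrder

/-- The kernel `{φ : P φ = 0}` of an anti-linear map `P : D → D′` into the algebraic dual,
as a submodule of `D`. -/
def antiKer {D : Type*} [AddCommGroup D] [Module ℂ D]
    (P : D → (D →ₗ[ℂ] ℂ))
    (hadd : ∀ φ ψ : D, P (φ + ψ) = P φ + P ψ)
    (hsmul : ∀ (c : ℂ) (φ : D), P (c • φ) = starRingEnd ℂ c • P φ) : Submodule ℂ D where
  carrier := {φ | P φ = 0}
  add_mem' := fun {a b} ha hb => by
    simp only [Set.mem_setOf_eq] at *
    rw [hadd, ha, hb, add_zero]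
  zero_mem' := by
    have h := hsmul 0 0
    rw [zero_smul] at h
    simpa using h
  smul_mem' := fun c a ha => by
    simp only [Set.mem_setOf_eq] at *
    rw [hsmul, ha, smul_zero]

section Aux

variable {D : Type*} [AddCommGroup D] [Module ℂ D]
variable (P : D → (D →ₗ[ℂ] ℂ))

lemma aP_zero (hsmul : ∀ (c : ℂ) (φ : D), P (c • φ) = starRingEnd ℂ c • P φ) :
    P 0 = 0 := by
  have h := hsmul 0 0
  rw [zero_smul] at h
  simpa using h

lemma aP_sum (hadd : ∀ φ ψ : D, P (φ + ψ) = P φ + P ψ)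
    (hsmul : ∀ (c : ℂ) (φ : D), P (c • φ) = starRingEnd ℂ c • P φ)
    {ι : Type*} (s : Finset ι) (f : ι → D) :
    P (∑ i ∈ s, f i) = ∑ i ∈ s, P (f i) := by
  classical
  induction s using Finset.induction with
  | empty => simpa using aP_zero P hsmul
  | insert _ _ h ih => rw [Finset.sum_insert h, hadd, ih, Finset.sum_insert h]

lemma aP_eq_of_sub (hadd : ∀ φ ψ : D, P (φ + ψ) = P φ + P ψ)
    {s s' : D} (h : P (s - s') = 0) : P s = P s' := by
  have h2 : P (s' + (s - s')) = P s' + P (s - s') := hadd _ _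
  have e : s' + (s - s') = s := by abel
  rw [e, h, add_zero] at h2
  exact h2

lemma aP_zero_of_self (hadd : ∀ φ ψ : D, P (φ + ψ) = P φ + P ψ)
    (hsmul : ∀ (c : ℂ) (φ : D), P (c • φ) = starRingEnd ℂ c • P φ)
    (hreal : ∀ φ ψ : D, P φ ψ = starRingEnd ℂ (P ψ φ))
    (hpos : ∀ ψ : D, 0 ≤ P ψ ψ)
    {φ : D} (h : P φ φ = 0) : P φ = 0 := by
  have key : ∀ ψ : D, (P φ ψ).re = 0 := by
    intro ψ
    set z := P φ ψ with hz
    have hle : ∀ t : ℝ, 0 ≤ 2 * z.re * t + (P ψ ψ).re := by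
      intro t
      have h1 : P ((t : ℂ) • φ + ψ) = (t : ℂ) • P φ + P ψ := by
        rw [hadd, hsmul]
        norm_num
      have h2 : (0 : ℂ) ≤ P ((t : ℂ) • φ + ψ) ((t : ℂ) • φ + ψ) := hpos _
      rw [h1] at h2
      have hsym : P ψ φ = starRingEnd ℂ z := by rw [hreal ψ φ]
      simp only [LinearMap.add_apply, LinearMap.smul_apply, map_add, map_smul, h, hsym,
        smul_eq_mul, mul_zero, zero_add, mul_add] at h2
      rw [Complex.le_def] at h2
      have h3 := h2.1
      simp only [Complex.zero_re, Complex.add_re, Complex.mul_re, Complex.ofReal_re,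
        Complex.ofReal_im, Complex.conj_re, Complex.conj_im, zero_mul, sub_zero] at h3
      linarith
    have hre : z.re = 0 := by
      by_contra hne
      have ha : 2 * z.re ≠ 0 := by simpa using hne
      have := hle (-(((P ψ ψ).re) + 1) / (2 * z.re))
      rw [mul_div_cancel₀ _ ha] at this
      linarith
    exact hre
  have key2 : ∀ ψ : D, P φ ψ = 0 := by
    intro ψ
    have h1 : P φ (Complex.I • ψ) = Complex.I * P φ ψ := by
      rw [map_smul, smul_eq_mul]
    have h2 := key (Complex.I • ψ)
    rw [h1] at h2
    simp only [Complex.mul_re, Complex.I_re, Complex.I_im, zero_mul, one_mul, zero_sub,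
      neg_eq_zero] at h2
    have h3 := key ψ
    exact Complex.ext h3 h2
  exact LinearMap.ext key2

lemma mk_out'' {K : Submodule ℂ D} (u : D ⧸ K) :
    (Submodule.Quotient.mk (Quotient.out u) : D ⧸ K) = u := by
  rw [← Submodule.Quotient.mk''_eq_mk]
  exact Quotient.out_eq' u

lemma aP_congr (hadd : ∀ φ ψ : D, P (φ + ψ) = P φ + P ψ)
    (hsmul : ∀ (c : ℂ) (φ : D), P (c • φ) = starRingEnd ℂ c • P φ)
    (hreal : ∀ φ ψ : D, P φ ψ = starRingEnd ℂ (P ψ φ))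
    {s s' t t' : D}
    (hs : (Submodule.Quotient.mk s : D ⧸ antiKer P hadd hsmul) = Submodule.Quotient.mk s')
    (ht : (Submodule.Quotient.mk t : D ⧸ antiKer P hadd hsmul) = Submodule.Quotient.mk t') :
    P s t = P s' t' := by
  have hs' : s - s' ∈ antiKer P hadd hsmul := (Submodule.Quotient.eq _).mp hs
  have ht' : t - t' ∈ antiKer P hadd hsmul := (Submodule.Quotient.eq _).mp ht
  have h1 : P s = P s' := aP_eq_of_sub P hadd hs'
  have h3 : P s' (t - t') = 0 := by
    rw [hreal s' (t - t'), show P (t - t') = 0 from ht', LinearMap.zero_apply, map_zero]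
  have h4 : P s' t - P s' t' = 0 := by rw [← map_sub, h3]
  rw [h1, sub_eq_zero.mp h4]

noncomputable def quotCore
    (hadd : ∀ φ ψ : D, P (φ + ψ) = P φ + P ψ)
    (hsmul : ∀ (c : ℂ) (φ : D), P (c • φ) = starRingEnd ℂ c • P φ)
    (hreal : ∀ φ ψ : D, P φ ψ = starRingEnd ℂ (P ψ φ))
    (hpos : ∀ ψ : D, 0 ≤ P ψ ψ) :
    InnerProductSpace.Core ℂ (D ⧸ antiKer P hadd hsmul) where
  inner u v := P (Quotient.out u) (Quotient.out v)
  conj_inner_symm u v := (hreal _ _).symm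
  re_inner_nonneg u := by
    have h := hpos (Quotient.out u)
    rw [Complex.le_def] at h
    simpa using h.1
  definite u hu := by
    have h1 : P (Quotient.out u) = 0 := aP_zero_of_self P hadd hsmul hreal hpos hu
    have h2 : Quotient.out u ∈ antiKer P hadd hsmul := h1
    rw [← mk_out'' u, Submodule.Quotient.mk_eq_zero]
    exact h2
  add_left u v w := by
    have h1 : (Submodule.Quotient.mk (Quotient.out (u + v)) : D ⧸ antiKer P hadd hsmul)
        = Submodule.Quotient.mk (Quotient.out u + Quotient.out v) := by
      rw [Submodule.Quotient.mk_add, mk_out'', mk_out'', mk_out'']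
    show P (Quotient.out (u + v)) (Quotient.out w)
        = P (Quotient.out u) (Quotient.out w) + P (Quotient.out v) (Quotient.out w)
    rw [aP_congr P hadd hsmul hreal h1 rfl, hadd, LinearMap.add_apply]
  smul_left u v r := by
    have h1 : (Submodule.Quotient.mk (Quotient.out (r • u)) : D ⧸ antiKer P hadd hsmul)
        = Submodule.Quotient.mk (r • Quotient.out u) := by
      rw [Submodule.Quotient.mk_smul, mk_out'', mk_out'']
    show P (Quotient.out (r • u)) (Quotient.out v)
        = starRingEnd ℂ r * P (Quotient.out u) (Quotient.out v)
    rw [aP_congr P hadd hsmul hreal h1 rfl, hsmul, LinearMap.smul_apply, smul_eq_mul]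

lemma quotCore_inner_mk (hadd : ∀ φ ψ : D, P (φ + ψ) = P φ + P ψ)
    (hsmul : ∀ (c : ℂ) (φ : D), P (c • φ) = starRingEnd ℂ c • P φ)
    (hreal : ∀ φ ψ : D, P φ ψ = starRingEnd ℂ (P ψ φ))
    (hpos : ∀ ψ : D, 0 ≤ P ψ ψ) (x y : D) :
    (quotCore P hadd hsmul hreal hpos).inner
      (Submodule.Quotient.mk x) (Submodule.Quotient.mk y) = P x y :=
  aP_congr P hadd hsmul hreal (mk_out'' _) (mk_out'' _)

end Aux

lemma exists_orthonormal_repr {E F : Type*} [AddCommGroup E] [Module ℂ E]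
    [NormedAddCommGroup F] [InnerProductSpace ℂ F] (u : E ⊗[ℂ] F) :
    ∃ (n : ℕ) (a : Fin n → E) (e : Fin n → F),
      (∀ k l, (inner ℂ (e k) (e l) : ℂ) = if k = l then 1 else 0) ∧
      u = ∑ k, a k ⊗ₜ[ℂ] e k := by
  classical
  obtain ⟨S, rfl⟩ := TensorProduct.exists_finset u
  set W := Submodule.span ℂ ((S.image Prod.snd : Finset F) : Set F) with hW
  haveI : FiniteDimensional ℂ W := inferInstance
  set b := stdOrthonormalBasis ℂ W with hb
  have hmem : ∀ i ∈ S, i.2 ∈ W := fun i hi =>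
    Submodule.subset_span (Finset.mem_coe.mpr (Finset.mem_image_of_mem Prod.snd hi))
  refine ⟨_, fun k => ∑ i ∈ S.attach, (b.repr ⟨i.1.2, hmem i.1 i.2⟩ k) • i.1.1,
    fun k => ((b k : W) : F), fun k l => ?_, ?_⟩
  · rw [← Submodule.coe_inner]
    exact orthonormal_iff_ite.mp b.orthonormal k l
  · rw [← Finset.sum_attach S (fun i => i.1 ⊗ₜ[ℂ] i.2)]
    have key : ∀ i : {x // x ∈ S},
        (i.1.2 : F) = ∑ k, (b.repr ⟨i.1.2, hmem i.1 i.2⟩ k) • ((b k : W) : F) := by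
      intro i
      have h1 := b.sum_repr ⟨i.1.2, hmem i.1 i.2⟩
      have h2 := congrArg (Submodule.subtype W) h1
      simp only [map_sum, map_smul, Submodule.coe_subtype] at h2
      exact h2.symm
    calc ∑ i ∈ S.attach, i.1.1 ⊗ₜ[ℂ] i.1.2
        = ∑ i ∈ S.attach, ∑ k, (b.repr ⟨i.1.2, hmem i.1 i.2⟩ k) • (i.1.1 ⊗ₜ[ℂ] ((b k : W) : F)) := by
          refine Finset.sum_congr rfl fun i _ => ?_
          conv_lhs => rw [key i]
          rw [TensorProduct.tmul_sum]
          exact Finset.sum_congr rfl fun k _ => TensorProduct.tmul_smul _ _ _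
      _ = ∑ k, ∑ i ∈ S.attach, (b.repr ⟨i.1.2, hmem i.1 i.2⟩ k) • (i.1.1 ⊗ₜ[ℂ] ((b k : W) : F)) :=
          Finset.sum_comm
      _ = ∑ k, (∑ i ∈ S.attach, (b.repr ⟨i.1.2, hmem i.1 i.2⟩ k) • i.1.1) ⊗ₜ[ℂ] ((b k : W) : F) := by
          refine Finset.sum_congr rfl fun k _ => ?_
          rw [TensorProduct.sum_tmul]
          exact Finset.sum_congr rfl fun i _ => (TensorProduct.smul_tmul' _ _ _).symm

/-- Let `P₁`, `P₂` be anti-linear maps on complex inner product spaces `D₁`,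
`D₂` with reality and positivity, and let `P` on `D₁ ⊗ D₂` be their (anti-linearly extended)
product, `P(φ₁⊗φ₂)[ψ₁⊗ψ₂] = P₁(φ₁)[ψ₁]·P₂(φ₂)[ψ₂]`.  Then
`ker P = ker P₁ ⊗ D₂ + D₁ ⊗ ker P₂`, and the quotient `(D₁⊗D₂)/ker P` with the form induced by
`P` is isometrically isomorphic to `(D₁/ker P₁) ⊗ (D₂/ker P₂)` with the product of the induced
forms, via `[ψ₁⊗ψ₂] ↦ [ψ₁]⊗[ψ₂]`. -/
theorem stmt18 {D₁ D₂ : Type*}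
    [NormedAddCommGroup D₁] [InnerProductSpace ℂ D₁]
    [NormedAddCommGroup D₂] [InnerProductSpace ℂ D₂]
    (P₁ : D₁ → (D₁ →ₗ[ℂ] ℂ)) (P₂ : D₂ → (D₂ →ₗ[ℂ] ℂ))
    (h₁add : ∀ φ ψ : D₁, P₁ (φ + ψ) = P₁ φ + P₁ ψ)
    (h₁smul : ∀ (c : ℂ) (φ : D₁), P₁ (c • φ) = starRingEnd ℂ c • P₁ φ)
    (h₁real : ∀ φ ψ : D₁, P₁ φ ψ = starRingEnd ℂ (P₁ ψ φ))
    (h₁pos : ∀ ψ : D₁, 0 ≤ P₁ ψ ψ)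
    (h₂add : ∀ φ ψ : D₂, P₂ (φ + ψ) = P₂ φ + P₂ ψ)
    (h₂smul : ∀ (c : ℂ) (φ : D₂), P₂ (c • φ) = starRingEnd ℂ c • P₂ φ)
    (h₂real : ∀ φ ψ : D₂, P₂ φ ψ = starRingEnd ℂ (P₂ ψ φ))
    (h₂pos : ∀ ψ : D₂, 0 ≤ P₂ ψ ψ)
    (P : (D₁ ⊗[ℂ] D₂) → ((D₁ ⊗[ℂ] D₂) →ₗ[ℂ] ℂ))
    (hadd : ∀ φ ψ : D₁ ⊗[ℂ] D₂, P (φ + ψ) = P φ + P ψ)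
    (hsmul : ∀ (c : ℂ) (φ : D₁ ⊗[ℂ] D₂), P (c • φ) = starRingEnd ℂ c • P φ)
    (hdec : ∀ (φ₁ ψ₁ : D₁) (φ₂ ψ₂ : D₂),
      P (φ₁ ⊗ₜ[ℂ] φ₂) (ψ₁ ⊗ₜ[ℂ] ψ₂) = P₁ φ₁ ψ₁ * P₂ φ₂ ψ₂) :
    -- ker P = ker P₁ ⊗ D₂ + D₁ ⊗ ker P₂
    antiKer P hadd hsmul
      = Submodule.span ℂ
          ({t : D₁ ⊗[ℂ] D₂ | ∃ (x : D₁) (y : D₂), P₁ x = 0 ∧ t = x ⊗ₜ[ℂ] y} ∪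
           {t : D₁ ⊗[ℂ] D₂ | ∃ (x : D₁) (y : D₂), P₂ y = 0 ∧ t = x ⊗ₜ[ℂ] y}) ∧
    -- the quotient by ker P is isometrically isomorphic to the tensor product of quotients
    ∃ e : ((D₁ ⊗[ℂ] D₂) ⧸ antiKer P hadd hsmul) ≃ₗ[ℂ]
        ((D₁ ⧸ antiKer P₁ h₁add h₁smul) ⊗[ℂ] (D₂ ⧸ antiKer P₂ h₂add h₂smul)),
      (∀ (x : D₁) (y : D₂),
        e (Submodule.Quotient.mk (x ⊗ₜ[ℂ] y))
          = Submodule.Quotient.mk x ⊗ₜ[ℂ] Submodule.Quotient.mk y) ∧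
      ∃ Bq : ((D₁ ⧸ antiKer P₁ h₁add h₁smul) ⊗[ℂ] (D₂ ⧸ antiKer P₂ h₂add h₂smul)) →
          ((D₁ ⧸ antiKer P₁ h₁add h₁smul) ⊗[ℂ] (D₂ ⧸ antiKer P₂ h₂add h₂smul)) → ℂ,
        (∀ (x x' : D₁) (y y' : D₂),
          Bq (Submodule.Quotient.mk x ⊗ₜ[ℂ] Submodule.Quotient.mk y)
             (Submodule.Quotient.mk x' ⊗ₜ[ℂ] Submodule.Quotient.mk y')
            = P₁ x x' * P₂ y y') ∧
        (∀ s t : D₁ ⊗[ℂ] D₂,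
          Bq (e (Submodule.Quotient.mk s)) (e (Submodule.Quotient.mk t)) = P s t) := by
  classical
  have hP0 : P 0 = 0 := aP_zero P hsmul
  -- Hermiticity of P
  have hPreal : ∀ s t : D₁ ⊗[ℂ] D₂, P s t = starRingEnd ℂ (P t s) := by
    intro s
    induction s using TensorProduct.induction_on with
    | zero => intro t; rw [hP0]; simp
    | tmul a b =>
      intro t
      induction t using TensorProduct.induction_on with
      | zero => rw [hP0]; simp
      | tmul c d => rw [hdec, hdec, map_mul, ← h₁real, ← h₂real]
      | add t₁ t₂ ih₁ ih₂ =>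
        rw [map_add, ih₁, ih₂, hadd, LinearMap.add_apply, map_add]
    | add s₁ s₂ ih₁ ih₂ =>
      intro t
      rw [hadd, LinearMap.add_apply, ih₁ t, ih₂ t, map_add (P t), map_add]
  set Qm : (D₁ ⊗[ℂ] D₂) →ₗ[ℂ]
      ((D₁ ⧸ antiKer P₁ h₁add h₁smul) ⊗[ℂ] (D₂ ⧸ antiKer P₂ h₂add h₂smul)) :=
    TensorProduct.map (antiKer P₁ h₁add h₁smul).mkQ (antiKer P₂ h₂add h₂smul).mkQ with hQm
  have hQsurj : Function.Surjective Qm :=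
    TensorProduct.map_surjective (Submodule.mkQ_surjective _) (Submodule.mkQ_surjective _)
  have hkerQ : LinearMap.ker Qm
      = LinearMap.range (LinearMap.lTensor D₁ (antiKer P₂ h₂add h₂smul).subtype)
        ⊔ LinearMap.range (LinearMap.rTensor D₂ (antiKer P₁ h₁add h₁smul).subtype) :=
    TensorProduct.map_ker (LinearMap.exact_subtype_mkQ _) (Submodule.mkQ_surjective _)
      (LinearMap.exact_subtype_mkQ _) (Submodule.mkQ_surjective _)
  have hrange1 : LinearMap.range (LinearMap.lTensor D₁ (antiKer P₂ h₂add h₂smul).subtype)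
      = Submodule.span ℂ {t : D₁ ⊗[ℂ] D₂ | ∃ (x : D₁) (y : D₂), P₂ y = 0 ∧ t = x ⊗ₜ[ℂ] y} := by
    apply le_antisymm
    · rintro u ⟨w, rfl⟩
      induction w using TensorProduct.induction_on with
      | zero => simp
      | tmul x y =>
        exact Submodule.subset_span ⟨x, y.1, y.2, by simp [LinearMap.lTensor_tmul]⟩
      | add w₁ w₂ ih₁ ih₂ => rw [map_add]; exact add_mem ih₁ ih₂
    · rw [Submodule.span_le]
      rintro t ⟨x, y, hy, rfl⟩
      exact ⟨x ⊗ₜ[ℂ] (⟨y, hy⟩ : antiKer P₂ h₂add h₂smul), by simp [LinearMap.lTensor_tmul]⟩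
  have hrange2 : LinearMap.range (LinearMap.rTensor D₂ (antiKer P₁ h₁add h₁smul).subtype)
      = Submodule.span ℂ {t : D₁ ⊗[ℂ] D₂ | ∃ (x : D₁) (y : D₂), P₁ x = 0 ∧ t = x ⊗ₜ[ℂ] y} := by
    apply le_antisymm
    · rintro u ⟨w, rfl⟩
      induction w using TensorProduct.induction_on with
      | zero => simp
      | tmul x y =>
        exact Submodule.subset_span ⟨x.1, y, x.2, by simp [LinearMap.rTensor_tmul]⟩
      | add w₁ w₂ ih₁ ih₂ => rw [map_add]; exact add_mem ih₁ ih₂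
    · rw [Submodule.span_le]
      rintro t ⟨x, y, hx, rfl⟩
      exact ⟨(⟨x, hx⟩ : antiKer P₁ h₁add h₁smul) ⊗ₜ[ℂ] y, by simp [LinearMap.rTensor_tmul]⟩
  have hkerQspan : LinearMap.ker Qm
      = Submodule.span ℂ
          ({t : D₁ ⊗[ℂ] D₂ | ∃ (x : D₁) (y : D₂), P₁ x = 0 ∧ t = x ⊗ₜ[ℂ] y} ∪
           {t : D₁ ⊗[ℂ] D₂ | ∃ (x : D₁) (y : D₂), P₂ y = 0 ∧ t = x ⊗ₜ[ℂ] y}) := by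
    rw [hkerQ, Submodule.span_union, hrange1, hrange2, sup_comm]
  have hspan_le : Submodule.span ℂ
          ({t : D₁ ⊗[ℂ] D₂ | ∃ (x : D₁) (y : D₂), P₁ x = 0 ∧ t = x ⊗ₜ[ℂ] y} ∪
           {t : D₁ ⊗[ℂ] D₂ | ∃ (x : D₁) (y : D₂), P₂ y = 0 ∧ t = x ⊗ₜ[ℂ] y})
        ≤ antiKer P hadd hsmul := by
    rw [Submodule.span_le]
    rintro t (⟨x, y, hx, rfl⟩ | ⟨x, y, hy, rfl⟩)
    · show P _ = 0
      apply LinearMap.ext; intro w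
      induction w using TensorProduct.induction_on with
      | zero => simp
      | tmul c d => rw [hdec, hx]; simp
      | add w₁ w₂ ih₁ ih₂ =>
        simp only [map_add, LinearMap.zero_apply] at *
        rw [ih₁, ih₂, add_zero]
    · show P _ = 0
      apply LinearMap.ext; intro w
      induction w using TensorProduct.induction_on with
      | zero => simp
      | tmul c d => rw [hdec, hy]; simp
      | add w₁ w₂ ih₁ ih₂ =>
        simp only [map_add, LinearMap.zero_apply] at *
        rw [ih₁, ih₂, add_zero]
  -- P t = 0 → Qm t = 0
  have hPtoQ : ∀ t : D₁ ⊗[ℂ] D₂, P t = 0 → Qm t = 0 := by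
    intro t ht
    let cd := quotCore P₂ h₂add h₂smul h₂real h₂pos
    let instN : NormedAddCommGroup (D₂ ⧸ antiKer P₂ h₂add h₂smul) := cd.toNormedAddCommGroup
    let instIP : @InnerProductSpace ℂ (D₂ ⧸ antiKer P₂ h₂add h₂smul) _
        instN.toSeminormedAddCommGroup := InnerProductSpace.ofCore cd.toCore
    obtain ⟨n, a, e, he, hrep⟩ :=
      @exists_orthonormal_repr (D₁ ⧸ antiKer P₁ h₁add h₁smul)
        (D₂ ⧸ antiKer P₂ h₂add h₂smul) _ _ instN instIP (Qm t)
    choose ax hax using fun k => Submodule.mkQ_surjective (antiKer P₁ h₁add h₁smul) (a k)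
    choose ey hey using fun k => Submodule.mkQ_surjective (antiKer P₂ h₂add h₂smul) (e k)
    set s : D₁ ⊗[ℂ] D₂ := ∑ k, ax k ⊗ₜ[ℂ] ey k with hsdef
    have hQs : Qm s = Qm t := by
      rw [hrep, hsdef, map_sum]
      exact Finset.sum_congr rfl fun k _ => by
        rw [hQm, TensorProduct.map_tmul, hax, hey]
    have hst : s - t ∈ antiKer P hadd hsmul := by
      have h2 : s - t ∈ LinearMap.ker Qm := by
        rw [LinearMap.mem_ker, map_sub, hQs, sub_self]
      rw [hkerQspan] at h2
      exact hspan_le h2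
    have hPs : P s = P t := aP_eq_of_sub P hadd hst
    have hPss : P s s = 0 := by
      have h2 : P s (s - t) = 0 := by
        rw [hPreal, show P (s - t) = 0 from hst, LinearMap.zero_apply, map_zero]
      have h3 : P s s = P s t := by
        have h4 : P s s - P s t = 0 := by rw [← map_sub, h2]
        exact sub_eq_zero.mp h4
      rw [h3, hPs, ht, LinearMap.zero_apply]
    have hexp : P s s = ∑ k, ∑ l, P₁ (ax k) (ax l) * P₂ (ey k) (ey l) := by
      conv_lhs => rw [hsdef]
      rw [aP_sum P hadd hsmul, LinearMap.sum_apply]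
      refine Finset.sum_congr rfl fun k _ => ?_
      rw [map_sum]
      exact Finset.sum_congr rfl fun l _ => hdec _ _ _ _
    have hP₂e : ∀ k l, P₂ (ey k) (ey l) = if k = l then 1 else 0 := by
      intro k l
      have h1 : (quotCore P₂ h₂add h₂smul h₂real h₂pos).inner (e k) (e l)
          = P₂ (ey k) (ey l) := by
        rw [show e k = (Submodule.Quotient.mk (ey k) : D₂ ⧸ antiKer P₂ h₂add h₂smul) from by
              rw [← Submodule.mkQ_apply, hey],
            show e l = (Submodule.Quotient.mk (ey l) : D₂ ⧸ antiKer P₂ h₂add h₂smul) from by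
              rw [← Submodule.mkQ_apply, hey]]
        exact quotCore_inner_mk P₂ h₂add h₂smul h₂real h₂pos (ey k) (ey l)
      rw [← h1]
      exact he k l
    have hsum : ∑ k, P₁ (ax k) (ax k) = 0 := by
      calc ∑ k, P₁ (ax k) (ax k)
          = ∑ k, ∑ l, P₁ (ax k) (ax l) * P₂ (ey k) (ey l) := by
            refine Finset.sum_congr rfl fun k _ => ?_
            simp [hP₂e]
        _ = P s s := hexp.symm
        _ = 0 := hPss
    have ha0 : ∀ k, a k = 0 := by
      intro k
      have h0 : P₁ (ax k) (ax k) = 0 :=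
        (Finset.sum_eq_zero_iff_of_nonneg (fun l _ => h₁pos (ax l))).mp hsum k (Finset.mem_univ k)
      have h1 : P₁ (ax k) = 0 := aP_zero_of_self P₁ h₁add h₁smul h₁real h₁pos h0
      rw [← hax k, Submodule.mkQ_apply, Submodule.Quotient.mk_eq_zero]
      exact h1
    rw [hrep]
    simp [ha0]
  have hker : antiKer P hadd hsmul
      = Submodule.span ℂ
          ({t : D₁ ⊗[ℂ] D₂ | ∃ (x : D₁) (y : D₂), P₁ x = 0 ∧ t = x ⊗ₜ[ℂ] y} ∪
           {t : D₁ ⊗[ℂ] D₂ | ∃ (x : D₁) (y : D₂), P₂ y = 0 ∧ t = x ⊗ₜ[ℂ] y}) := by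
    apply le_antisymm
    · intro t ht
      have h1 : t ∈ LinearMap.ker Qm := hPtoQ t ht
      rwa [hkerQspan] at h1
    · exact hspan_le
  have hkerP_eq : antiKer P hadd hsmul = LinearMap.ker Qm := by rw [hker, hkerQspan]
  set E := (Submodule.quotEquivOfEq _ _ hkerP_eq).trans
      (Qm.quotKerEquivOfSurjective hQsurj) with hE
  have he_mk : ∀ u : D₁ ⊗[ℂ] D₂, E (Submodule.Quotient.mk u) = Qm u := fun u => rfl
  have he_tmul : ∀ (x : D₁) (y : D₂),
      E (Submodule.Quotient.mk (x ⊗ₜ[ℂ] y))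
        = Submodule.Quotient.mk x ⊗ₜ[ℂ] Submodule.Quotient.mk y := by
    intro x y
    rw [he_mk, hQm, TensorProduct.map_tmul, Submodule.mkQ_apply, Submodule.mkQ_apply]
  refine ⟨hker, E, he_tmul,
    fun u v => P (Quotient.out (E.symm u)) (Quotient.out (E.symm v)), ?_, ?_⟩
  · intro x x' y y'
    dsimp only
    rw [← he_tmul x y, ← he_tmul x' y', E.symm_apply_apply, E.symm_apply_apply,
      aP_congr P hadd hsmul hPreal (mk_out'' _) (mk_out'' _), hdec]
  · intro s t
    dsimp only
    rw [E.symm_apply_apply, E.symm_apply_apply]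
    exact aP_congr P hadd hsmul hPreal (mk_out'' _) (mk_out'' _)
end
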